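/- Let G be a hereditarily collectionwise Hausdorff topological group with a suitable set S, and let H be a transfinite sequentially dense subgroup of G (every point of G is the unique accumulation point of some subset of H). Then H has a suitable set; and if S is closed in G, H has a closed suitable set. -/

import Mathlib

open Filter Topology

/-- A space is collectionwise Hausdorff if every closed discrete subset can be separated
by a discrete family of open neighborhoods. -/
def CollectionwiseHausdorff (X : Type*) [TopologicalSpace X] : Prop :=
  ∀ S : Set X, IsClosed S → (∀ x ∈ S, ∃ U : Set X, IsOpen U ∧ U ∩ S = {x}) →
    ∃ U : X → Set X, (∀ x ∈ S, IsOpen (U x) ∧ x ∈ U x) ∧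
      ∀ y : X, ∃ V : Set X, IsOpen V ∧ y ∈ V ∧ {x ∈ S | (V ∩ U x).Nonempty}.Subsingleton

section Helpers

variable {G : Type*} [TopologicalSpace G]

private lemma accPt_singleton_mem_closure {g a : G} (h : AccPt g (𝓟 ({a} : Set G))) :
    g ∈ closure ({a} : Set G) := by
  rw [mem_closure_iff_nhds]
  intro t ht
  obtain ⟨y, hy, _⟩ := accPt_iff_nhds.mp h t ht
  exact ⟨y, hy⟩

private lemma accPt_of_mem_closure {g : G} {A : Set G} (hcl : g ∈ closure A)
    (hnot : g ∉ A) : AccPt g (𝓟 A) := by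
  rw [accPt_principal_iff_clusterPt, Set.diff_singleton_eq_self hnot]
  exact mem_closure_iff_clusterPt.mp hcl

private lemma accPt_diff_singleton {x z : G} {A : Set G}
    (hx : x ∉ closure ({z} : Set G)) (h : AccPt x (𝓟 A)) : AccPt x (𝓟 (A \ {z})) := by
  have hA : AccPt x (𝓟 ((A \ {z}) ∪ (A ∩ {z}))) := by
    refine h.mono (principal_mono.mpr fun a ha => ?_)
    by_cases h1 : a = z
    · exact Or.inr ⟨ha, h1⟩
    · exact Or.inl ⟨ha, h1⟩
  rw [← sup_principal, accPt_sup] at hA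
  rcases hA with h' | h'
  · exact h'
  · exact absurd (accPt_singleton_mem_closure
      (h'.mono (principal_mono.mpr Set.inter_subset_right))) hx

private lemma not_accPt_empty (g : G) : ¬ AccPt g (𝓟 (∅ : Set G)) := by
  intro h
  rw [principal_empty] at h
  exact h.ne (inf_bot_eq _)

end Helpers

/-- Let `G` be a hereditarily collectionwise Hausdorff topological group with a suitable
set `S`, and let `H` be a transfinite sequentially dense subgroup of `G` (every point of
`G` is the unique accumulation point of some subset of `H`). Then `H` has a suitable set
`T`; moreover if `S` is closed in `G` then `T` is closed in `H`. -/
theorem transfiniteSequentiallyDense_subgroup_suitable {G : Type*} [Group G]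
    [TopologicalSpace G] [IsTopologicalGroup G]
    (hcwH : ∀ Y : Set G, CollectionwiseHausdorff Y)
    (S : Set G) (hSdisc : ∀ x ∈ S, ∃ U : Set G, IsOpen U ∧ U ∩ S = {x})
    (hSclosed : IsClosed (S ∪ {1}))
    (hSdense : Dense (Subgroup.closure S : Set G))
    (H : Subgroup G)
    (htsd : ∀ x : G, ∃ D : Set G, D ⊆ (H : Set G) ∧ AccPt x (𝓟 D) ∧
      ∀ y : G, AccPt y (𝓟 D) → y = x) :
    ∃ T : Set G, T ⊆ (H : Set G) ∧
      (∀ x ∈ T, ∃ U : Set G, IsOpen U ∧ U ∩ T = {x}) ∧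
      closure (T ∪ {1}) ∩ (H : Set G) ⊆ T ∪ {1} ∧
      (H : Set G) ⊆ closure (Subgroup.closure T : Set G) ∧
      (IsClosed S → closure T ∩ (H : Set G) ⊆ T) := by
  classical
  choose D hDH hDacc hDuniq using htsd
  choose! O₀ hO₀open hO₀eq using hSdisc
  set S' : Set G := S \ {1} with hS'def
  have hclS' : closure S' ⊆ S ∪ {1} :=
    closure_minimal (Set.diff_subset.trans Set.subset_union_left) hSclosed
  set Y : Set G := (closure S' \ S')ᶜ with hYdef
  have hS'Y : S' ⊆ Y := fun x hx hmem => hmem.2 hx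
  have hYc : ∀ z : G, z ≠ 1 → z ∈ Y := by
    intro z hz hmem
    rcases hclS' hmem.1 with h | h
    · exact hmem.2 ⟨h, hz⟩
    · exact hz h
  -- S' is a closed discrete subset of the subspace Y
  have hSyClosed : IsClosed (Subtype.val ⁻¹' S' : Set Y) := by
    have heq : (Subtype.val ⁻¹' S' : Set Y) = Subtype.val ⁻¹' (closure S') := by
      ext z
      constructor
      · exact fun h => subset_closure h
      · intro h
        by_contra hns
        exact z.2 ⟨h, hns⟩
    rw [heq]
    exact isClosed_closure.preimage continuous_subtype_val
  have hSyDisc : ∀ z ∈ (Subtype.val ⁻¹' S' : Set Y),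
      ∃ U : Set Y, IsOpen U ∧ U ∩ (Subtype.val ⁻¹' S') = {z} := by
    intro z hz
    have hzS : (z : G) ∈ S := hz.1
    refine ⟨Subtype.val ⁻¹' (O₀ z), (hO₀open _ hzS).preimage continuous_subtype_val, ?_⟩
    refine Set.eq_singleton_iff_unique_mem.mpr ⟨⟨?_, hz⟩, ?_⟩
    · have hmem : (z : G) ∈ O₀ z ∩ S := by rw [hO₀eq _ hzS]; rfl
      exact hmem.1
    · rintro w ⟨hwO, hwS'⟩
      have hmem : (w : G) ∈ O₀ z ∩ S := ⟨hwO, hwS'.1⟩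
      rw [hO₀eq _ hzS] at hmem
      exact Subtype.ext hmem
  obtain ⟨Uy, hUy, hUdisc⟩ := hcwH Y _ hSyClosed hSyDisc
  -- extract the discrete family as open sets of G
  have hOx : ∀ x : G, ∀ hx : x ∈ S', ∃ Ox : Set G, IsOpen Ox ∧ x ∈ Ox ∧
      ∀ t : G, ∀ ht : t ∈ Y,
        ((⟨t, ht⟩ : Y) ∈ Uy ⟨x, hS'Y hx⟩ ↔ t ∈ Ox) := by
    intro x hx
    obtain ⟨hopen, hmem⟩ := hUy ⟨x, hS'Y hx⟩ hx
    obtain ⟨Ox, hOxopen, hpre⟩ := isOpen_induced_iff.mp hopen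
    refine ⟨Ox, hOxopen, ?_, ?_⟩
    · rw [← hpre] at hmem
      exact hmem
    · intro t ht
      rw [← hpre]
      exact Iff.rfl
  choose! O hOopen hOmem hOiff using hOx
  have hVdisc : ∀ g : G, g ∈ Y → ∃ V : Set G, IsOpen V ∧ g ∈ V ∧
      ∀ x₁, x₁ ∈ S' → ∀ x₂, x₂ ∈ S' →
        (V ∩ O x₁ ∩ Y).Nonempty → (V ∩ O x₂ ∩ Y).Nonempty → x₁ = x₂ := by
    intro g hg
    obtain ⟨Vy, hVyopen, hgVy, hsub⟩ := hUdisc ⟨g, hg⟩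
    obtain ⟨V, hVopen, hVpre⟩ := isOpen_induced_iff.mp hVyopen
    rw [← hVpre] at hgVy
    refine ⟨V, hVopen, hgVy, ?_⟩
    intro x₁ h₁ x₂ h₂ hne₁ hne₂
    have key : ∀ x (hx : x ∈ S'), (V ∩ O x ∩ Y).Nonempty →
        (⟨x, hS'Y hx⟩ : Y) ∈ {z ∈ (Subtype.val ⁻¹' S' : Set Y) | (Vy ∩ Uy z).Nonempty} := by
      rintro x hx ⟨t, ⟨htV, htO⟩, htY⟩
      refine ⟨hx, ⟨⟨t, htY⟩, ?_, (hOiff x hx t htY).mpr htO⟩⟩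
      rw [← hVpre]
      exact htV
    have := hsub (key x₁ h₁ hne₁) (key x₂ h₂ hne₂)
    exact congrArg Subtype.val this
  -- the replacement sets
  set Sx : G → Set G := fun x =>
    if x ∈ (H : Set G) then {x}
    else if x ∈ closure ({1} : Set G) then ∅
    else (D x ∩ O x) \ {1} with hSxdef
  set T : Set G := ⋃ x ∈ S', Sx x with hTdef
  have hSxH : ∀ x ∈ S', Sx x ⊆ (H : Set G) := by
    intro x hx z hz
    simp only [hSxdef] at hz
    split_ifs at hz with h1 h2
    · rwa [Set.mem_singleton_iff.mp hz]
    · exact absurd hz (Set.notMem_empty z)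
    · exact hDH x hz.1.1
  have hSxO : ∀ x ∈ S', Sx x ⊆ O x := by
    intro x hx z hz
    simp only [hSxdef] at hz
    split_ifs at hz with h1 h2
    · rw [Set.mem_singleton_iff.mp hz]; exact hOmem x hx
    · exact absurd hz (Set.notMem_empty z)
    · exact hz.1.2
  have hSxY : ∀ x ∈ S', Sx x ⊆ Y := by
    intro x hx z hz
    simp only [hSxdef] at hz
    split_ifs at hz with h1 h2
    · rw [Set.mem_singleton_iff.mp hz]; exact hS'Y hx
    · exact absurd hz (Set.notMem_empty z)
    · exact hYc z hz.2
  have hTH : T ⊆ (H : Set G) := by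
    intro z hz
    rw [hTdef, Set.mem_iUnion₂] at hz
    obtain ⟨x, hx, hzx⟩ := hz
    exact hSxH x hx hzx
  have hxT : ∀ x ∈ S', x ∈ (H : Set G) → x ∈ T := by
    intro x hx hxH
    rw [hTdef, Set.mem_iUnion₂]
    refine ⟨x, hx, ?_⟩
    simp only [hSxdef, if_pos hxH]
    rfl
  -- key localization lemma
  have hkey : ∀ g : G, g ∈ (H : Set G) → g ∈ Y → AccPt g (𝓟 T) →
      ∃ x₀ ∈ S', x₀ ∈ (H : Set G) ∧ g ∈ closure ({x₀} : Set G) := by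
    intro g hgH hgY hacc
    obtain ⟨V, hVopen, hgV, hVuniq⟩ := hVdisc g hgY
    have hacc' : AccPt g (𝓟 (V ∩ T)) := hacc.nhds_inter (hVopen.mem_nhds hgV)
    have hne : (V ∩ T).Nonempty := by
      by_contra hne
      rw [Set.not_nonempty_iff_eq_empty] at hne
      rw [hne] at hacc'
      exact not_accPt_empty g hacc'
    obtain ⟨t₀, ht₀V, ht₀T⟩ := hne
    rw [hTdef, Set.mem_iUnion₂] at ht₀T
    obtain ⟨x₀, hx₀, ht₀⟩ := ht₀T
    have hwit : (V ∩ O x₀ ∩ Y).Nonempty :=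
      ⟨t₀, ⟨ht₀V, hSxO x₀ hx₀ ht₀⟩, hSxY x₀ hx₀ ht₀⟩
    have hsub : V ∩ T ⊆ Sx x₀ := by
      rintro t ⟨htV, htT⟩
      rw [hTdef, Set.mem_iUnion₂] at htT
      obtain ⟨x', hx', ht'⟩ := htT
      have hx'eq : x' = x₀ :=
        hVuniq x' hx' x₀ hx₀ ⟨t, ⟨htV, hSxO x' hx' ht'⟩, hSxY x' hx' ht'⟩ hwit
      rwa [hx'eq] at ht'
    have haccS : AccPt g (𝓟 (Sx x₀)) := hacc'.mono (principal_mono.mpr hsub)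
    by_cases hx₀H : x₀ ∈ (H : Set G)
    · refine ⟨x₀, hx₀, hx₀H, ?_⟩
      have heq : Sx x₀ = {x₀} := by simp only [hSxdef, if_pos hx₀H]
      rw [heq] at haccS
      exact accPt_singleton_mem_closure haccS
    · by_cases hx₀c : x₀ ∈ closure ({1} : Set G)
      · have heq : Sx x₀ = ∅ := by simp only [hSxdef, if_neg hx₀H, if_pos hx₀c]
        rw [heq] at haccS
        exact absurd haccS (not_accPt_empty g)
      · have hsub2 : Sx x₀ ⊆ D x₀ := by
          intro z hz
          simp only [hSxdef, if_neg hx₀H, if_neg hx₀c] at hz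
          exact hz.1.1
        have hgx₀ : g = x₀ := hDuniq x₀ g (haccS.mono (principal_mono.mpr hsub2))
        exact absurd (hgx₀ ▸ hgH) hx₀H
  refine ⟨T, hTH, ?_, ?_, ?_, ?_⟩
  · -- discreteness of T
    intro y hyT
    rw [hTdef, Set.mem_iUnion₂] at hyT
    obtain ⟨x, hxS', hySx⟩ := hyT
    by_cases hxH : x ∈ (H : Set G)
    · have hyx : y = x := by
        simp only [hSxdef, if_pos hxH] at hySx
        exact hySx
      subst hyx
      obtain ⟨V, hVopen, hyV, hVuniq⟩ := hVdisc y (hS'Y hxS')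
      refine ⟨V, hVopen, ?_⟩
      ext t
      simp only [Set.mem_inter_iff, Set.mem_singleton_iff]
      constructor
      · rintro ⟨htV, htT⟩
        rw [hTdef, Set.mem_iUnion₂] at htT
        obtain ⟨x', hx', ht'⟩ := htT
        have hx'eq : x' = y :=
          hVuniq x' hx' y hxS' ⟨t, ⟨htV, hSxO x' hx' ht'⟩, hSxY x' hx' ht'⟩
            ⟨y, ⟨hyV, hOmem y hxS'⟩, hS'Y hxS'⟩
        rw [hx'eq] at ht'
        simp only [hSxdef, if_pos hxH] at ht'
        exact ht'
      · rintro rfl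
        exact ⟨hyV, hxT t hxS' hxH⟩
    · by_cases hxc : x ∈ closure ({1} : Set G)
      · have heq : Sx x = ∅ := by simp only [hSxdef, if_neg hxH, if_pos hxc]
        rw [heq] at hySx
        exact absurd hySx (Set.notMem_empty y)
      · have hy' : y ∈ (D x ∩ O x) \ {1} := by
          simpa only [hSxdef, if_neg hxH, if_neg hxc] using hySx
        have hyD : y ∈ D x := hy'.1.1
        have hyO : y ∈ O x := hy'.1.2
        have hy1 : y ≠ 1 := hy'.2
        have hyx : y ≠ x := fun h => hxH (h ▸ hDH x hyD)
        have hnacc : ¬AccPt y (𝓟 (D x)) := fun h => hyx (hDuniq x y h)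
        rw [accPt_iff_nhds] at hnacc
        push_neg at hnacc
        obtain ⟨N, hN, hNprop⟩ := hnacc
        obtain ⟨W, hWN, hWopen, hyW⟩ := mem_nhds_iff.mp hN
        have hyY : y ∈ Y := hYc y hy1
        obtain ⟨V, hVopen, hyV, hVuniq⟩ := hVdisc y hyY
        refine ⟨W ∩ V, hWopen.inter hVopen, ?_⟩
        ext t
        simp only [Set.mem_inter_iff, Set.mem_singleton_iff]
        constructor
        · rintro ⟨⟨htW, htV⟩, htT⟩
          rw [hTdef, Set.mem_iUnion₂] at htT
          obtain ⟨x', hx', ht'⟩ := htT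
          have hx'eq : x' = x :=
            hVuniq x' hx' x hxS' ⟨t, ⟨htV, hSxO x' hx' ht'⟩, hSxY x' hx' ht'⟩
              ⟨y, ⟨hyV, hyO⟩, hyY⟩
          rw [hx'eq] at ht'
          have htD : t ∈ D x := by
            simp only [hSxdef, if_neg hxH, if_neg hxc] at ht'
            exact ht'.1.1
          exact hNprop t ⟨hWN htW, htD⟩
        · rintro rfl
          refine ⟨⟨hyW, hyV⟩, ?_⟩
          rw [hTdef, Set.mem_iUnion₂]
          exact ⟨x, hxS', hySx⟩
  · -- closure (T ∪ {1}) ∩ H ⊆ T ∪ {1}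
    rintro g ⟨hgcl, hgH⟩
    by_cases hg1 : g = 1
    · exact Or.inr hg1
    by_cases hgT : g ∈ T
    · exact Or.inl hgT
    rw [closure_union] at hgcl
    have hgS' : g ∈ S' → g ∈ T ∪ {1} := fun h => Or.inl (hxT g h hgH)
    rcases hgcl with hgclT | hgcl1
    · have hacc := accPt_of_mem_closure hgclT hgT
      obtain ⟨x₀, hx₀S', _, hgclx⟩ := hkey g hgH (hYc g hg1) hacc
      have hgS : g ∈ S ∪ {1} :=
        closure_minimal (Set.singleton_subset_iff.mpr (Set.mem_union_left _ hx₀S'.1)) hSclosed hgclx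
      rcases hgS with h | h
      · exact hgS' ⟨h, hg1⟩
      · exact absurd h hg1
    · have hgS : g ∈ S ∪ {1} :=
        closure_minimal (Set.singleton_subset_iff.mpr (Set.mem_union_right _ (Set.mem_singleton 1))) hSclosed hgcl1
      rcases hgS with h | h
      · exact hgS' ⟨h, hg1⟩
      · exact absurd h hg1
  · -- density
    have hsubS : S ⊆ closure (Subgroup.closure T : Set G) := by
      intro x hxS
      by_cases hx1 : x = 1
      · subst hx1
        exact subset_closure (Subgroup.one_mem _)
      have hxS' : x ∈ S' := ⟨hxS, hx1⟩
      by_cases hxH : x ∈ (H : Set G)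
      · exact subset_closure (Subgroup.subset_closure (hxT x hxS' hxH))
      by_cases hxc : x ∈ closure ({1} : Set G)
      · refine closure_mono ?_ hxc
        exact Set.singleton_subset_iff.mpr (Subgroup.one_mem _)
      · have h1 : AccPt x (𝓟 (O x ∩ D x)) :=
          (hDacc x).nhds_inter ((hOopen x hxS').mem_nhds (hOmem x hxS'))
        have h2 : AccPt x (𝓟 ((O x ∩ D x) \ {1})) := accPt_diff_singleton hxc h1
        have haccx : AccPt x (𝓟 (Sx x)) := by
          have heq : Sx x = (D x ∩ O x) \ {1} := by
            simp only [hSxdef, if_neg hxH, if_neg hxc]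
          rw [heq, Set.inter_comm (D x) (O x)]
          exact h2
        have hxcl : x ∈ closure (Sx x) :=
          mem_closure_iff_clusterPt.mpr (haccx.clusterPt)
        refine (closure_mono ?_) hxcl
        refine Set.Subset.trans ?_ Subgroup.subset_closure
        intro z hz
        rw [hTdef, Set.mem_iUnion₂]
        exact ⟨x, hxS', hz⟩
    have hle : Subgroup.closure S ≤ (Subgroup.closure T).topologicalClosure := by
      rw [Subgroup.closure_le]
      intro x hx
      rw [Subgroup.topologicalClosure_coe]
      exact hsubS hx
    have hcl : closure (Subgroup.closure S : Set G) ⊆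
        closure (Subgroup.closure T : Set G) := by
      rw [← Subgroup.topologicalClosure_coe]
      refine closure_minimal ?_ ((Subgroup.closure T).isClosed_topologicalClosure)
      exact fun x hx => hle hx
    intro h _
    exact hcl (hSdense.closure_eq ▸ Set.mem_univ h)
  · -- S closed : closure T ∩ H ⊆ T
    intro hScl
    have h1S : (1 : G) ∉ closure S' := by
      by_cases h1 : (1 : G) ∈ S
      · intro hc
        have h1O : (1 : G) ∈ O₀ 1 := by
          have : (1 : G) ∈ O₀ 1 ∩ S := by rw [hO₀eq 1 h1]; rfl
          exact this.1
        obtain ⟨z, hz⟩ := mem_closure_iff_nhds.mp hc (O₀ 1) ((hO₀open 1 h1).mem_nhds h1O)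
        have : z ∈ O₀ 1 ∩ S := ⟨hz.1, hz.2.1⟩
        rw [hO₀eq 1 h1] at this
        exact hz.2.2 this
      · intro hc
        have : closure S' ⊆ S := by
          rw [← hScl.closure_eq]
          exact closure_mono Set.diff_subset
        exact h1 (this hc)
    have hclS'sub : closure S' ⊆ S' := by
      intro z hz
      rcases hclS' hz with h | h
      · refine ⟨h, ?_⟩
        intro hz1
        rw [hz1] at hz
        exact h1S hz
      · rw [h] at hz
        exact absurd hz h1S
    have hYuniv : ∀ z : G, z ∈ Y := by
      intro z
      by_cases hz1 : z = 1
      · subst hz1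
        intro hmem
        exact h1S hmem.1
      · exact hYc z hz1
    rintro g ⟨hgcl, hgH⟩
    by_cases hgT : g ∈ T
    · exact hgT
    have hacc := accPt_of_mem_closure hgcl hgT
    obtain ⟨x₀, hx₀S', _, hgclx⟩ := hkey g hgH (hYuniv g) hacc
    have hgS' : g ∈ S' := by
      refine hclS'sub ?_
      refine (closure_mono ?_) hgclx
      exact Set.singleton_subset_iff.mpr hx₀S'
    exact hxT g hgS' hgH
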